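/- Weyl's weak majorization inequality: for any N×N complex matrix T, the sum of the F largest singular values is at least the sum of the F largest eigenvalue magnitudes, for every F ∈ {1,...,N}. -/

import Mathlib

open Matrix Polynomial Finset Module

noncomputable section


theorem univ_val_succ (n : ℕ) : (Finset.univ.val : Multiset (Fin (n+1))) =
    0 ::ₘ Multiset.map Fin.succ Finset.univ.val := by
  rw [Fin.univ_succ, Finset.cons_val, Finset.map_val]
  rfl

theorem perm_of_map_eq : ∀ (n : ℕ) {α : Type} (f g : Fin n → α),
    Multiset.map f Finset.univ.val = Multiset.map g Finset.univ.val →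
    ∃ e : Equiv.Perm (Fin n), ∀ i, f i = g (e i) := by
  intro n
  induction n with
  | zero => intro α f g h; exact ⟨Equiv.refl _, fun i => i.elim0⟩
  | succ n ih =>
    intro α f g h
    have h0 : f 0 ∈ Multiset.map g Finset.univ.val := by
      rw [← h]; exact Multiset.mem_map_of_mem f (Finset.mem_univ_val 0)
    obtain ⟨k, -, hk⟩ := Multiset.mem_map.1 h0
    set g' : Fin (n+1) → α := g ∘ (Equiv.swap 0 k) with hg'
    have hswap : Multiset.map (⇑(Equiv.swap 0 k)) Finset.univ.val = Finset.univ.val := by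
      simpa using congrArg Finset.val (Finset.map_univ_equiv (Equiv.swap 0 k))
    have hmapg' : Multiset.map g' Finset.univ.val = Multiset.map g Finset.univ.val := by
      rw [hg']
      conv_rhs => rw [← hswap]
      rw [Multiset.map_map]
    have h2 : Multiset.map (f ∘ Fin.succ) Finset.univ.val =
        Multiset.map (g' ∘ Fin.succ) Finset.univ.val := by
      have e1 : ∀ (F : Fin (n+1) → α), Multiset.map F Finset.univ.val =
          (F 0) ::ₘ Multiset.map (F ∘ Fin.succ) Finset.univ.val := by
        intro F; rw [univ_val_succ, Multiset.map_cons, Multiset.map_map]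
      have hf : (f 0) ::ₘ Multiset.map (f ∘ Fin.succ) Finset.univ.val =
          (g' 0) ::ₘ Multiset.map (g' ∘ Fin.succ) Finset.univ.val := by
        rw [← e1, ← e1, h, ← hmapg']
      have hg'0 : g' 0 = f 0 := by simp [hg', hk]
      rw [hg'0] at hf
      exact (Multiset.cons_inj_right _).1 hf
    obtain ⟨e', he'⟩ := ih (f ∘ Fin.succ) (g' ∘ Fin.succ) h2
    refine ⟨(Equiv.Perm.decomposeFin.symm (0, e')).trans (Equiv.swap 0 k), fun i => ?_⟩
    refine Fin.cases ?_ (fun j => ?_) i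
    · simp [hg', ← hk]
    · have := he' j
      simpa [hg'] using this

theorem card_filter_lt (N F : ℕ) (hFN : F ≤ N) :
    (Finset.univ.filter (fun i : Fin N => (i : ℕ) < F)).card = F := by
  have himg : Finset.univ.filter (fun i : Fin N => (i : ℕ) < F) =
      Finset.image (Fin.castLE hFN) Finset.univ := by
    ext j
    simp only [Finset.mem_filter, Finset.mem_univ, true_and, Finset.mem_image]
    constructor
    · intro hj
      refine ⟨⟨j, hj⟩, ?_⟩
      ext
      simp [Fin.castLE]
    · rintro ⟨i, rfl⟩
      exact i.isLt
  rw [himg, Finset.card_image_of_injective _ (Fin.castLE_injective hFN),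
    Finset.card_univ, Fintype.card_fin]

theorem abel_bound (N F : ℕ) (hF : 1 ≤ F) (hFN : F ≤ N)
    (σ c : Fin N → ℝ) (hσ0 : ∀ i, 0 ≤ σ i)
    (hσmono : ∀ i j : Fin N, i ≤ j → σ j ≤ σ i)
    (hc0 : ∀ i, 0 ≤ c i) (hc1 : ∀ i, c i ≤ 1)
    (hcs : ∑ i, c i ≤ F) :
    ∑ i, σ i * c i ≤ ∑ i ∈ Finset.univ.filter (fun i : Fin N => (i : ℕ) < F), σ i := by
  set P := Finset.univ.filter (fun i : Fin N => (i : ℕ) < F) with hP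
  set iF : Fin N := ⟨F - 1, by omega⟩ with hiF
  set s : ℝ := σ iF with hs
  have hs0 : 0 ≤ s := hσ0 _
  have hsle : ∀ i ∈ P, s ≤ σ i := by
    intro i hi
    rw [hP, Finset.mem_filter] at hi
    exact hσmono i iF (by simp [hiF, Fin.le_def]; omega)
  have hsge : ∀ i ∈ Pᶜ, σ i ≤ s := by
    intro i hi
    rw [hP, Finset.mem_compl, Finset.mem_filter] at hi
    refine hσmono iF i ?_
    simp only [not_and, Finset.mem_univ, true_implies, not_lt] at hi
    simp [hiF, Fin.le_def]; omega
  have hsplit : ∑ i, σ i * c i = ∑ i ∈ P, σ i * c i + ∑ i ∈ Pᶜ, σ i * c i :=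
    (Finset.sum_add_sum_compl P _).symm
  have h1 : ∑ i ∈ Pᶜ, σ i * c i ≤ s * ∑ i ∈ Pᶜ, c i := by
    rw [Finset.mul_sum]
    exact Finset.sum_le_sum fun i hi =>
      mul_le_mul_of_nonneg_right (hsge i hi) (hc0 i)
  have h2 : ∑ i ∈ Pᶜ, c i ≤ F - ∑ i ∈ P, c i := by
    have := Finset.sum_add_sum_compl P c
    linarith
  have hcard : ((P.card : ℕ) : ℝ) = F := by rw [hP, card_filter_lt N F hFN]
  have h3 : s * ∑ i ∈ Pᶜ, c i ≤ s * (F - ∑ i ∈ P, c i) :=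
    mul_le_mul_of_nonneg_left h2 hs0
  have expand : ∑ i ∈ P, s * (1 - c i) = (P.card : ℝ) * s - s * ∑ i ∈ P, c i := by
    rw [← Finset.mul_sum, Finset.sum_sub_distrib, Finset.sum_const, nsmul_eq_mul, mul_sub]
    ring
  have h5 : ∀ i ∈ P, σ i * c i + s * (1 - c i) ≤ σ i := by
    intro i hi
    nlinarith [hsle i hi, hc1 i, hc0 i]
  have h6 : ∑ i ∈ P, (σ i * c i + s * (1 - c i)) ≤ ∑ i ∈ P, σ i :=
    Finset.sum_le_sum h5
  rw [Finset.sum_add_distrib, expand, hcard] at h6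
  linarith

theorem key_ineq {E : Type} [NormedAddCommGroup E] [InnerProductSpace ℂ E]
    (N F : ℕ) (hF : 1 ≤ F) (hFN : F ≤ N)
    (f : E →ₗ[ℂ] E)
    (σ : Fin N → ℝ) (hσ0 : ∀ i, 0 ≤ σ i)
    (hσmono : ∀ i j : Fin N, i ≤ j → σ j ≤ σ i)
    (v : OrthonormalBasis (Fin N) ℂ E)
    (hv : ∀ i j, i ≠ j → (inner ℂ (f (v i)) (f (v j)) : ℂ) = 0)
    (hvn : ∀ i, ‖f (v i)‖ = σ i)
    (e : Fin N → E) (he : Orthonormal ℂ e) :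
    ∑ j ∈ Finset.univ.filter (fun j : Fin N => (j : ℕ) < F), ‖(inner ℂ (e j) (f (e j)) : ℂ)‖ ≤
      ∑ i ∈ Finset.univ.filter (fun i : Fin N => (i : ℕ) < F), σ i := by
  classical
  set P := Finset.univ.filter (fun j : Fin N => (j : ℕ) < F) with hP
  set w : Fin N → E := fun i => ((σ i : ℂ))⁻¹ • f (v i) with hw
  have hfv0 : ∀ i, σ i = 0 → f (v i) = 0 := by
    intro i h
    have : ‖f (v i)‖ = 0 := by rw [hvn, h]
    exact norm_eq_zero.mp this
  have hfv : ∀ i, f (v i) = (σ i : ℂ) • w i := by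
    intro i
    by_cases h : σ i = 0
    · simp [hw, hfv0 i h]
    · rw [hw]
      simp only
      rw [smul_smul, mul_inv_cancel₀ (by exact_mod_cast h), one_smul]
  have hw1 : ∀ i, σ i ≠ 0 → ‖w i‖ = 1 := by
    intro i h
    rw [hw]
    simp only [norm_smul, hvn i, norm_inv, Complex.norm_real]
    rw [Real.norm_eq_abs, abs_of_nonneg (hσ0 i)]
    field_simp
  have hwle : ∀ i, ‖w i‖ ≤ 1 := by
    intro i
    by_cases h : σ i = 0
    · simp [hw, hfv0 i h]
    · exact le_of_eq (hw1 i h)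
  -- coefficients
  set a : Fin N → Fin N → ℝ := fun i j => ‖(inner ℂ (e j) (v i) : ℂ)‖ ^ 2 with ha
  set b : Fin N → Fin N → ℝ := fun i j => ‖(inner ℂ (e j) (w i) : ℂ)‖ ^ 2 with hb
  set c : Fin N → ℝ := fun i => ∑ j ∈ P, (a i j + b i j) / 2 with hc
  -- step 1: expansion
  have hexp : ∀ j, (inner ℂ (e j) (f (e j)) : ℂ) =
      ∑ i, (inner ℂ (v i) (e j) : ℂ) * (inner ℂ (e j) (f (v i)) : ℂ) := by
    intro j
    have h1 : f (e j) = ∑ i, (inner ℂ (v i) (e j) : ℂ) • f (v i) := by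
      conv_lhs => rw [← v.sum_repr' (e j)]
      rw [map_sum]
      simp only [LinearMap.map_smul]
    rw [h1, inner_sum]
    simp only [inner_smul_right]
  -- step 2: pointwise bound
  have hstep2 : ∀ j, ‖(inner ℂ (e j) (f (e j)) : ℂ)‖ ≤
      ∑ i, σ i * ((a i j + b i j) / 2) := by
    intro j
    rw [hexp j]
    refine le_trans (norm_sum_le _ _) (Finset.sum_le_sum fun i _ => ?_)
    rw [norm_mul]
    have h2 : ‖(inner ℂ (e j) (f (v i)) : ℂ)‖ = σ i * ‖(inner ℂ (e j) (w i) : ℂ)‖ := by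
      rw [hfv i, inner_smul_right, norm_mul, Complex.norm_real,
        Real.norm_eq_abs, abs_of_nonneg (hσ0 i)]
    have h3 : ‖(inner ℂ (v i) (e j) : ℂ)‖ = ‖(inner ℂ (e j) (v i) : ℂ)‖ :=
      norm_inner_symm _ _
    rw [h2, h3]
    have hx : (0:ℝ) ≤ ‖(inner ℂ (e j) (v i) : ℂ)‖ := norm_nonneg _
    have hy : (0:ℝ) ≤ ‖(inner ℂ (e j) (w i) : ℂ)‖ := norm_nonneg _
    have hamgm : ‖(inner ℂ (e j) (v i) : ℂ)‖ * (σ i * ‖(inner ℂ (e j) (w i) : ℂ)‖) ≤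
        σ i * ((a i j + b i j) / 2) := by
      rw [ha, hb]
      simp only
      nlinarith [sq_nonneg (‖(inner ℂ (e j) (v i) : ℂ)‖ - ‖(inner ℂ (e j) (w i) : ℂ)‖), hσ0 i]
    exact hamgm
  -- step 3: swap sums
  have hswap : ∑ j ∈ P, ∑ i, σ i * ((a i j + b i j) / 2) = ∑ i, σ i * c i := by
    rw [Finset.sum_comm]
    refine Finset.sum_congr rfl fun i _ => ?_
    rw [hc]
    simp only
    rw [Finset.mul_sum]
  -- bounds on c
  have hc0' : ∀ i, 0 ≤ c i := by
    intro i
    refine Finset.sum_nonneg fun j _ => ?_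
    have : (0:ℝ) ≤ a i j := sq_nonneg _
    have : (0:ℝ) ≤ b i j := sq_nonneg _
    positivity
  have hc1' : ∀ i, c i ≤ 1 := by
    intro i
    have hA : ∑ j ∈ P, a i j ≤ 1 := by
      have := he.sum_inner_products_le (s := P) (v i)
      have hni : ‖v i‖ = 1 := v.orthonormal.1 i
      rw [hni] at this
      simpa [ha] using this
    have hB : ∑ j ∈ P, b i j ≤ 1 := by
      have := he.sum_inner_products_le (s := P) (w i)
      refine le_trans ?_ (le_trans this ?_)
      · exact le_of_eq (by simp [hb])
      · have := hwle i
        nlinarith [norm_nonneg (w i)]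
    rw [hc]
    simp only
    rw [← Finset.sum_div, Finset.sum_add_distrib]
    linarith
  have hcsum : ∑ i, c i ≤ F := by
    have hjb : ∀ j ∈ P, ∑ i, (a i j + b i j) / 2 ≤ 1 := by
      intro j _
      have hA : ∑ i, a i j ≤ 1 := by
        have h1 : ∀ i, a i j = ‖(inner ℂ (v i) (e j) : ℂ)‖ ^ 2 := by
          intro i; rw [ha]; simp only; rw [norm_inner_symm]
        have := (v.orthonormal).sum_inner_products_le (s := Finset.univ) (e j)
        rw [he.1 j] at this
        calc ∑ i, a i j = ∑ i, ‖(inner ℂ (v i) (e j) : ℂ)‖ ^ 2 :=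
              Finset.sum_congr rfl fun i _ => h1 i
          _ ≤ 1 ^ 2 := this
          _ = 1 := one_pow 2
      have hB : ∑ i, b i j ≤ 1 := by
        have hzero : ∀ i, σ i = 0 → b i j = 0 := by
          intro i h
          rw [hb]; simp [hw, hfv0 i h]
        set S : Finset (Fin N) := Finset.univ.filter (fun i => σ i ≠ 0) with hS
        have hsub : ∑ i, b i j = ∑ i ∈ S, b i j := by
          rw [hS]
          refine (Finset.sum_filter_of_ne fun i _ hne => ?_).symm
          by_contra hcon
          exact hne (hzero i hcon)
        have hSne : ∀ i : ↥S, σ i.1 ≠ 0 := by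
          intro i
          exact (Finset.mem_filter.mp i.2).2
        have hon : Orthonormal ℂ (fun i : ↥S => w i.1) := by
          constructor
          · intro i; exact hw1 i.1 (hSne i)
          · intro i k hik
            rw [hw]
            simp only
            rw [inner_smul_left, inner_smul_right,
              hv i.1 k.1 (fun hh => hik (Subtype.ext hh))]
            ring
        have hbes := hon.sum_inner_products_le (s := Finset.univ) (e j)
        rw [he.1 j, one_pow] at hbes
        have hsub2 : ∑ i ∈ S, b i j =
            ∑ i : ↥S, ‖(inner ℂ (w i.1) (e j) : ℂ)‖ ^ 2 := by
          calc ∑ i ∈ S, b i j = ∑ i : ↥S, b i.1 j := (Finset.sum_coe_sort _ _).symm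
            _ = ∑ i : ↥S, ‖(inner ℂ (w i.1) (e j) : ℂ)‖ ^ 2 :=
              Finset.sum_congr rfl fun i _ => by rw [hb]; simp only; rw [norm_inner_symm]
        rw [hsub, hsub2]
        exact hbes
      rw [← Finset.sum_div, Finset.sum_add_distrib]
      linarith
    calc ∑ i, c i = ∑ i, ∑ j ∈ P, (a i j + b i j) / 2 := rfl
      _ = ∑ j ∈ P, ∑ i, (a i j + b i j) / 2 := Finset.sum_comm
      _ ≤ ∑ j ∈ P, 1 := Finset.sum_le_sum hjb
      _ = (P.card : ℝ) := by simp
      _ = F := by rw [hP, card_filter_lt N F hFN]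
  calc ∑ j ∈ P, ‖(inner ℂ (e j) (f (e j)) : ℂ)‖
      ≤ ∑ j ∈ P, ∑ i, σ i * ((a i j + b i j) / 2) :=
        Finset.sum_le_sum fun j _ => hstep2 j
    _ = ∑ i, σ i * c i := hswap
    _ ≤ ∑ i ∈ P, σ i := by
        rw [hP]
        exact abel_bound N F hF hFN σ c hσ0 hσmono hc0' hc1' hcsum


-- charmatrix commutes with principal submatrix
theorem charmatrix_submatrix_succ {R : Type} [CommRing R] {n : ℕ}
    (M : Matrix (Fin (n+1)) (Fin (n+1)) R) :
    (charmatrix M).submatrix Fin.succ Fin.succ = charmatrix (M.submatrix Fin.succ Fin.succ) := by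
  ext i j
  by_cases h : i = j
  · subst h
    simp [charmatrix_apply_eq]
  · rw [Matrix.submatrix_apply, charmatrix_apply_ne _ _ _ (by simpa using h),
      charmatrix_apply_ne _ _ _ h, Matrix.submatrix_apply]

-- charpoly of a matrix whose first column is concentrated at the corner
theorem charpoly_first_col {R : Type} [CommRing R] {n : ℕ}
    (M : Matrix (Fin (n+1)) (Fin (n+1)) R) (h : ∀ i, i ≠ 0 → M i 0 = 0) :
    M.charpoly = (X - C (M 0 0)) * (M.submatrix Fin.succ Fin.succ).charpoly := by
  rw [Matrix.charpoly, Matrix.charpoly, Matrix.det_succ_column_zero]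
  rw [Finset.sum_eq_single 0]
  · rw [charmatrix_apply_eq, Fin.succAbove_zero, charmatrix_submatrix_succ]
    simp
  · intro i _ hi
    rw [charmatrix_apply_ne _ _ _ hi, h i hi]
    simp
  · simp

-- existence of an eigenvector for a root of the charpoly
theorem exists_eigenvector {V : Type} [NormedAddCommGroup V] [InnerProductSpace ℂ V]
    [FiniteDimensional ℂ V] (f : V →ₗ[ℂ] V) (μ : ℂ) (h : f.charpoly.IsRoot μ) :
    ∃ x : V, x ≠ 0 ∧ f x = μ • x := by
  classical
  set b := Module.finBasis ℂ V with hb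
  set M := LinearMap.toMatrix b b f with hM
  have hchar : f.charpoly = M.charpoly := (LinearMap.charpoly_toMatrix f b).symm
  have hdet : (μ • (1 : Matrix _ _ ℂ) - M).det = 0 := by
    have h1 : M.charpoly.eval μ = 0 := by rw [← hchar]; exact h
    rw [Matrix.charpoly] at h1
    have h2 : eval μ (charmatrix M).det = ((evalRingHom μ).mapMatrix (charmatrix M)).det := by
      rw [← RingHom.map_det]
      rfl
    have h3 : (evalRingHom μ).mapMatrix (charmatrix M) = μ • (1 : Matrix _ _ ℂ) - M := by
      ext i j
      by_cases hij : i = j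
      · subst hij
        simp [RingHom.mapMatrix_apply, charmatrix_apply_eq, Matrix.one_apply]
      · simp [RingHom.mapMatrix_apply, charmatrix_apply_ne _ _ _ hij, Matrix.one_apply, hij]
    rw [← h3, ← h2, h1]
  obtain ⟨v, hv0, hv⟩ := (Matrix.exists_mulVec_eq_zero_iff).mpr hdet
  have hMv : M *ᵥ v = μ • v := by
    have h4 : (μ • (1 : Matrix _ _ ℂ) - M) *ᵥ v = μ • v - M *ᵥ v := by
      rw [Matrix.sub_mulVec, Matrix.smul_mulVec, Matrix.one_mulVec]
    rw [h4] at hv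
    linear_combination (norm := module) -hv
  refine ⟨b.equivFun.symm v, ?_, ?_⟩
  · intro hzero
    apply hv0
    have := congrArg b.equivFun hzero
    rw [LinearEquiv.apply_symm_apply, map_zero] at this
    exact this
  · have hrepr : ⇑(b.repr (b.equivFun.symm v)) = v := by
      ext i
      rw [← Basis.equivFun_apply, LinearEquiv.apply_symm_apply]
    have h4 : ⇑(b.repr (f (b.equivFun.symm v))) = M *ᵥ v := by
      rw [hM, ← LinearMap.toMatrix_mulVec_repr b b f, hrepr]
    have h5 : b.equivFun (f (b.equivFun.symm v)) = b.equivFun (μ • b.equivFun.symm v) := by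
      rw [_root_.map_smul, LinearEquiv.apply_symm_apply]
      ext i
      rw [Basis.equivFun_apply, h4, hMv]
    exact b.equivFun.injective h5

variable {V : Type} [NormedAddCommGroup V] [InnerProductSpace ℂ V]

-- orthonormality of a cons family
theorem orthonormal_cons [FiniteDimensional ℂ V] {m : ℕ} (u : V) (hu : ‖u‖ = 1)
    (c : Fin m → ↥((ℂ ∙ u)ᗮ)) (hc : Orthonormal ℂ c) :
    Orthonormal ℂ (Fin.cons u (fun i => (c i : V)) : Fin (m+1) → V) := by
  rw [orthonormal_iff_ite]
  intro i j
  refine Fin.cases ?_ (fun i' => ?_) i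
  · refine Fin.cases ?_ (fun j' => ?_) j
    · simp only [Fin.cons_zero, if_pos rfl]
      rw [inner_self_eq_norm_sq_to_K, hu]
      norm_num
    · simp only [Fin.cons_zero, Fin.cons_succ]
      rw [if_neg (by simp [Fin.ext_iff])]
      exact (Submodule.mem_orthogonal _ _).mp (c j').2 u (Submodule.mem_span_singleton_self u)
  · refine Fin.cases ?_ (fun j' => ?_) j
    · simp only [Fin.cons_zero, Fin.cons_succ]
      rw [if_neg (by simp [Fin.ext_iff])]
      rw [inner_eq_zero_symm]
      exact (Submodule.mem_orthogonal _ _).mp (c i').2 u (Submodule.mem_span_singleton_self u)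
    · simp only [Fin.cons_succ]
      rw [← Submodule.coe_inner]
      rw [orthonormal_iff_ite] at hc
      rw [hc i' j']
      simp [Fin.succ_inj]

-- inner product with orthogonal projection
theorem inner_orthProj [FiniteDimensional ℂ V] (W : Submodule ℂ V) (x : ↥W) (y : V) :
    (inner ℂ (x : V) y : ℂ) = inner ℂ x (W.orthogonalProjectionOnto y) := by
  have h := Submodule.sub_starProjection_mem_orthogonal (K := W) y
  have h2 := (Submodule.mem_orthogonal W _).mp h (x : V) x.2
  rw [inner_sub_right, sub_eq_zero] at h2
  rw [h2, Submodule.coe_inner, Submodule.starProjection_apply]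

theorem schur_diag : ∀ (n : ℕ) (V : Type) (_ : NormedAddCommGroup V),
    ∀ (_ : @InnerProductSpace ℂ V _ _) (_ : FiniteDimensional ℂ V),
    finrank ℂ V = n → ∀ (f : V →ₗ[ℂ] V) (l : Fin n → ℂ),
    f.charpoly.roots = Multiset.map l Finset.univ.val →
    ∃ e : Fin n → V, Orthonormal ℂ e ∧ ∀ j, (inner ℂ (e j) (f (e j)) : ℂ) = l j := by
  intro n
  induction n with
  | zero =>
    intro V _ _ _ _ f l _
    exact ⟨fun i => i.elim0, by
      constructor
      · intro i; exact i.elim0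
      · intro i; exact i.elim0, fun i => i.elim0⟩
  | succ n ih =>
    intro V iN iI iF hdim f l hroots
    classical
    have hroot : f.charpoly.IsRoot (l 0) := by
      have hmem : l 0 ∈ f.charpoly.roots := by
        rw [hroots]; exact Multiset.mem_map_of_mem l (Finset.mem_univ_val 0)
      exact isRoot_of_mem_roots hmem
    obtain ⟨x, hx0, hfx⟩ := exists_eigenvector f (l 0) hroot
    have hxn : ‖x‖ ≠ 0 := norm_ne_zero_iff.mpr hx0
    set u : V := ((‖x‖ : ℂ))⁻¹ • x with hu
    have hun : ‖u‖ = 1 := by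
      rw [hu, norm_smul, norm_inv, Complex.norm_real, Real.norm_eq_abs,
        abs_of_nonneg (norm_nonneg x)]
      field_simp
    have hu0 : u ≠ 0 := by
      intro h
      rw [h, norm_zero] at hun
      norm_num at hun
    have hfu : f u = l 0 • u := by
      rw [hu, LinearMap.map_smul, hfx, smul_comm]
    set W := (ℂ ∙ u)ᗮ with hW
    haveI : Fact (finrank ℂ V = n + 1) := ⟨hdim⟩
    have hWrank : finrank ℂ ↥W = n := Submodule.finrank_orthogonal_span_singleton hu0
    set g : ↥W →ₗ[ℂ] ↥W :=
      (W.orthogonalProjectionOnto).toLinearMap ∘ₗ (f ∘ₗ W.subtype) with hg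
    set bW : OrthonormalBasis (Fin n) ℂ ↥W :=
      (stdOrthonormalBasis ℂ ↥W).reindex (finCongr hWrank) with hbW
    set B1 : Fin (n+1) → V := Fin.cons u (fun i => ((bW i : ↥W) : V)) with hB1
    have hB1on : Orthonormal ℂ B1 := orthonormal_cons u hun bW bW.orthonormal
    have hcard : Fintype.card (Fin (n+1)) = finrank ℂ V := by simp [hdim]
    set B : Basis (Fin (n+1)) ℂ V :=
      basisOfLinearIndependentOfCardEqFinrank hB1on.linearIndependent hcard with hB
    have hBcoe : ⇑B = B1 := coe_basisOfLinearIndependentOfCardEqFinrank _ _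
    set Bo : OrthonormalBasis (Fin (n+1)) ℂ V :=
      OrthonormalBasis.mk hB1on (by rw [← hBcoe]; exact le_of_eq (B.span_eq).symm) with hBo
    have hBocoe : ⇑Bo = B1 := OrthonormalBasis.coe_mk _ _
    set M : Matrix (Fin (n+1)) (Fin (n+1)) ℂ :=
      LinearMap.toMatrix Bo.toBasis Bo.toBasis f with hM
    have hMent : ∀ i j, M i j = (inner ℂ (B1 i) (f (B1 j)) : ℂ) := by
      intro i j
      rw [hM, LinearMap.toMatrix_apply, Bo.coe_toBasis_repr_apply, Bo.repr_apply_apply,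
        Bo.coe_toBasis, hBocoe]
    have hite := orthonormal_iff_ite.mp hB1on
    have hB10 : B1 0 = u := by rw [hB1]; exact Fin.cons_zero _ _
    have hB1succ : ∀ i : Fin n, B1 i.succ = ((bW i : ↥W) : V) := by
      intro i; rw [hB1]; exact Fin.cons_succ _ _ _
    have hMcol : ∀ i, i ≠ 0 → M i 0 = 0 := by
      intro i hi
      have h0 : (inner ℂ (B1 i) u : ℂ) = 0 := by
        have := hite i 0
        rw [if_neg hi, hB10] at this
        exact this
      rw [hMent, hB10, hfu, inner_smul_right, h0, mul_zero]
    have hM00 : M 0 0 = l 0 := by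
      rw [hMent, hB10, hfu, inner_smul_right, inner_self_eq_norm_sq_to_K, hun]
      norm_num
    have hMsub : M.submatrix Fin.succ Fin.succ = LinearMap.toMatrix bW.toBasis bW.toBasis g := by
      ext i j
      rw [Matrix.submatrix_apply, hMent, LinearMap.toMatrix_apply, bW.coe_toBasis_repr_apply,
        bW.repr_apply_apply, bW.coe_toBasis, hB1succ, hB1succ]
      rw [inner_orthProj W (bW i) (f ((bW j : ↥W) : V))]
      rfl
    have hcharf : f.charpoly = M.charpoly := (LinearMap.charpoly_toMatrix f Bo.toBasis).symm
    have hcharg : g.charpoly = (M.submatrix Fin.succ Fin.succ).charpoly := by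
      rw [hMsub]; exact (LinearMap.charpoly_toMatrix g bW.toBasis).symm
    have hfact : f.charpoly = (X - C (l 0)) * g.charpoly := by
      rw [hcharf, hcharg, ← hM00]
      exact charpoly_first_col M hMcol
    have hgroots : g.charpoly.roots = Multiset.map (l ∘ Fin.succ) Finset.univ.val := by
      have h1 : f.charpoly.roots = {l 0} + g.charpoly.roots := by
        rw [hfact, Polynomial.roots_mul, roots_X_sub_C]
        exact mul_ne_zero (X_sub_C_ne_zero (l 0)) g.charpoly_monic.ne_zero
      have h2 : Multiset.map l Finset.univ.val =
          l 0 ::ₘ Multiset.map (l ∘ Fin.succ) Finset.univ.val := by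
        rw [univ_val_succ, Multiset.map_cons, Multiset.map_map]
      have h3 : l 0 ::ₘ g.charpoly.roots =
          l 0 ::ₘ Multiset.map (l ∘ Fin.succ) Finset.univ.val := by
        rw [← Multiset.singleton_add, ← h1, hroots, h2]
      exact (Multiset.cons_inj_right _).mp h3
    obtain ⟨e', he'on, he'diag⟩ :=
      ih ↥W inferInstance inferInstance inferInstance hWrank g (l ∘ Fin.succ) hgroots
    refine ⟨Fin.cons u (fun j => ((e' j : ↥W) : V)), orthonormal_cons u hun e' he'on, ?_⟩
    intro j
    refine Fin.cases ?_ (fun j' => ?_) j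
    · rw [Fin.cons_zero, hfu, inner_smul_right, inner_self_eq_norm_sq_to_K, hun]
      norm_num
    · rw [Fin.cons_succ]
      rw [inner_orthProj W (e' j') (f ((e' j' : ↥W) : V))]
      exact he'diag j'



-- charpoly of toEuclideanLin agrees with matrix charpoly
theorem charpoly_toEuclideanLin {N : ℕ} (T : Matrix (Fin N) (Fin N) ℂ) :
    (Matrix.toEuclideanLin T).charpoly = T.charpoly := by
  have h1 : Matrix.toEuclideanLin T =
      Matrix.toLin (PiLp.basisFun 2 ℂ (Fin N)) (PiLp.basisFun 2 ℂ (Fin N)) T := by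
    rw [Matrix.toEuclideanLin_eq_toLin]
  rw [← LinearMap.charpoly_toMatrix (Matrix.toEuclideanLin T) (PiLp.basisFun 2 ℂ (Fin N)),
    h1, LinearMap.toMatrix_toLin]

-- charpoly roots of a Hermitian matrix are its eigenvalues
theorem herm_roots {N : ℕ} (A : Matrix (Fin N) (Fin N) ℂ) (hA : A.IsHermitian) :
    A.charpoly.roots = Multiset.map (fun i => (hA.eigenvalues i : ℂ)) Finset.univ.val := by
  classical
  set b := hA.eigenvectorBasis with hb
  set fA := Matrix.toEuclideanLin A with hfA
  have hfAb : ∀ j, fA (b j) = ((hA.eigenvalues j : ℂ)) • b j := by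
    intro j
    have h := hA.mulVec_eigenvectorBasis j
    apply (WithLp.equiv 2 (Fin N → ℂ)).injective
    change Matrix.toLin' A (WithLp.equiv 2 _ (b j)) = _
    ext i
    have := congrFun h i
    simp only [Pi.smul_apply] at this
    simp only [WithLp.equiv_apply, WithLp.ofLp_smul, Pi.smul_apply]
    rw [Matrix.toLin'_apply, this]
    simp [Complex.real_smul, hb]
  have hMat : LinearMap.toMatrix b.toBasis b.toBasis fA =
      Matrix.diagonal (fun i => (hA.eigenvalues i : ℂ)) := by
    ext i j
    rw [LinearMap.toMatrix_apply, b.coe_toBasis_repr_apply, b.repr_apply_apply, b.coe_toBasis,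
      hfAb j, inner_smul_right]
    by_cases hij : i = j
    · subst hij
      rw [Matrix.diagonal_apply_eq]
      have : (inner ℂ (b i) (b i) : ℂ) = 1 := by
        rw [inner_self_eq_norm_sq_to_K, b.orthonormal.1 i]
        norm_num
      rw [this, mul_one]
    · rw [Matrix.diagonal_apply_ne _ hij, b.orthonormal.2 hij, mul_zero]
  have hchar : A.charpoly = (Matrix.diagonal (fun i => (hA.eigenvalues i : ℂ))).charpoly := by
    rw [← charpoly_toEuclideanLin A, ← LinearMap.charpoly_toMatrix fA b.toBasis, hMat]
  have hcm : charmatrix (Matrix.diagonal (fun i => (hA.eigenvalues i : ℂ))) =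
      Matrix.diagonal (fun i => (X : ℂ[X]) - C ((hA.eigenvalues i : ℂ))) := by
    ext i j
    by_cases hij : i = j
    · subst hij
      rw [charmatrix_apply_eq, Matrix.diagonal_apply_eq, Matrix.diagonal_apply_eq]
    · rw [charmatrix_apply_ne _ _ _ hij, Matrix.diagonal_apply_ne _ hij,
        Matrix.diagonal_apply_ne _ hij, map_zero, neg_zero]
  have hprod : (Matrix.diagonal (fun i => (hA.eigenvalues i : ℂ))).charpoly =
      ((Finset.univ.val.map (fun i => (hA.eigenvalues i : ℂ))).map (fun a => X - C a)).prod := by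
    rw [Matrix.charpoly, hcm, Matrix.det_diagonal, Multiset.map_map]
    rfl
  rw [hchar, hprod, Polynomial.roots_multiset_prod_X_sub_C]

theorem stmt_11 (N : ℕ) (T : Matrix (Fin N) (Fin N) ℂ)
    (σ : Fin N → ℝ) (hσ0 : ∀ i, 0 ≤ σ i)
    (hσ : (Tᴴ * T).charpoly.roots =
      Multiset.map (fun i => ((σ i : ℂ)) ^ 2) Finset.univ.val)
    (hσmono : ∀ i j : Fin N, i ≤ j → σ j ≤ σ i)
    (lam : Fin N → ℂ)
    (hlam : T.charpoly.roots = Multiset.map lam Finset.univ.val)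
    (hlammono : ∀ i j : Fin N, i ≤ j → ‖lam j‖ ≤ ‖lam i‖) :
    ∀ F : ℕ, 1 ≤ F → F ≤ N →
      ∑ i ∈ Finset.univ.filter (fun i : Fin N => (i : ℕ) < F), ‖lam i‖ ≤
        ∑ i ∈ Finset.univ.filter (fun i : Fin N => (i : ℕ) < F), σ i := by
  intro F hF hFN
  classical
  set f := Matrix.toEuclideanLin T with hf
  set A := Tᴴ * T with hA'
  have hA : A.IsHermitian := Matrix.isHermitian_conjTranspose_mul_self T
  -- pair up eigenvalues of A with σ²
  have hpair : Multiset.map (fun i => ((σ i : ℂ)) ^ 2) Finset.univ.val =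
      Multiset.map (fun i => (hA.eigenvalues i : ℂ)) Finset.univ.val := by
    rw [← hσ, herm_roots A hA]
  obtain ⟨p, hp⟩ := perm_of_map_eq N _ _ hpair
  have hpreal : ∀ i, σ i ^ 2 = hA.eigenvalues (p i) := by
    intro i
    have := hp i
    exact_mod_cast this
  set v : OrthonormalBasis (Fin N) ℂ (EuclideanSpace ℂ (Fin N)) :=
    hA.eigenvectorBasis.reindex p.symm with hv'
  have hvi : ∀ i, v i = hA.eigenvectorBasis (p i) := by
    intro i
    rw [hv', OrthonormalBasis.reindex_apply, Equiv.symm_symm]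
  -- inner products of images
  have hinner : ∀ x y : EuclideanSpace ℂ (Fin N),
      (inner ℂ (f x) (f y) : ℂ) = inner ℂ x (Matrix.toEuclideanLin A y) := by
    intro x y
    rw [hA']
    rw [EuclideanSpace.inner_eq_star_dotProduct, EuclideanSpace.inner_eq_star_dotProduct]
    rw [hf]
    simp only [Matrix.ofLp_toLpLin]
    rw [Matrix.toLin'_apply, Matrix.toLin'_apply, Matrix.toLin'_apply, Matrix.star_mulVec,
      dotProduct_comm, ← Matrix.dotProduct_mulVec, Matrix.mulVec_mulVec, dotProduct_comm]
  have hfAb : ∀ j, Matrix.toEuclideanLin A (hA.eigenvectorBasis j) =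
      ((hA.eigenvalues j : ℂ)) • hA.eigenvectorBasis j := by
    intro j
    have h := hA.mulVec_eigenvectorBasis j
    apply (WithLp.equiv 2 (Fin N → ℂ)).injective
    change Matrix.toLin' A (WithLp.equiv 2 _ (hA.eigenvectorBasis j)) = _
    ext i
    have := congrFun h i
    simp only [Pi.smul_apply] at this
    simp only [WithLp.equiv_apply, WithLp.ofLp_smul, Pi.smul_apply]
    rw [Matrix.toLin'_apply]
    rw [this]
    simp [Complex.real_smul]
  have hv : ∀ i j, i ≠ j → (inner ℂ (f (v i)) (f (v j)) : ℂ) = 0 := by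
    intro i j hij
    rw [hinner, hvi, hvi, hfAb, inner_smul_right,
      hA.eigenvectorBasis.orthonormal.2 (fun h => hij (p.injective h)), mul_zero]
  have hvn : ∀ i, ‖f (v i)‖ = σ i := by
    intro i
    have h1 : (inner ℂ (f (v i)) (f (v i)) : ℂ) = ((hA.eigenvalues (p i) : ℂ)) := by
      rw [hinner, hvi, hfAb, inner_smul_right]
      have : (inner ℂ (hA.eigenvectorBasis (p i)) (hA.eigenvectorBasis (p i)) : ℂ) = 1 := by
        rw [inner_self_eq_norm_sq_to_K, hA.eigenvectorBasis.orthonormal.1]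
        norm_num
      rw [this, mul_one]
    have h2 : ((‖f (v i)‖ ^ 2 : ℝ) : ℂ) = ((hA.eigenvalues (p i) : ℂ)) := by
      rw [← h1, inner_self_eq_norm_sq_to_K]
      norm_cast
    have h3 : ‖f (v i)‖ ^ 2 = hA.eigenvalues (p i) := by exact_mod_cast h2
    have h4 : ‖f (v i)‖ ^ 2 = σ i ^ 2 := by rw [h3, ← hpreal]
    rw [← Real.sqrt_sq (norm_nonneg (f (v i))), h4, Real.sqrt_sq (hσ0 i)]
  -- Schur basis
  have hfroots : f.charpoly.roots = Multiset.map lam Finset.univ.val := by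
    rw [hf, charpoly_toEuclideanLin, hlam]
  obtain ⟨e, heon, hediag⟩ := schur_diag N (EuclideanSpace ℂ (Fin N)) _ _ _
    finrank_euclideanSpace_fin f lam hfroots
  have hkey := key_ineq N F hF hFN f σ hσ0 hσmono v hv hvn e heon
  refine le_trans (le_of_eq ?_) hkey
  refine Finset.sum_congr rfl fun j _ => ?_
  rw [hediag j]

end
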